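/- arXiv:2103.07706 — 2 statements merged into one kernel-verified Lean document; each statement's English description precedes it below -/
import Mathlib

section
/- Let E be a complex Banach space, L : E →L[ℂ] E, N : E → E, and let a finite index set I with weights w : I → ℝ and phase shifts s : I → ℝ be given. Fix tⁿ ∈ ℝ and Δt ∈ ℝ, and set t^{n+1} = tⁿ + Δt. Suppose Vⁿ, V₁ ∈ E satisfy V₁ = Vⁿ + Δt • ∑_{k ∈ I} w k • exp(-(tⁿ + s k) • L)(N(exp((tⁿ + s k) • L)(Vⁿ))). Define Ūⁿ = exp(tⁿ • L)(Vⁿ) and Ū₁ = exp(t^{n+1} • L)(V₁). Then Ū₁ = exp(Δt • L)(Ūⁿ) + Δt • exp(Δt • L)(∑_{k ∈ I} w k • exp(-(s k) • L)(N(exp((s k) • L)(Ūⁿ)))). -/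
open NormedSpace

lemma exp_smul_add_apply
    {E : Type*} [NormedAddCommGroup E] [NormedSpace ℂ E] [CompleteSpace E]
    (L : E →L[ℂ] E) (a b : ℂ) (x : E) :
    exp ((a + b) • L) x = exp (a • L) (exp (b • L) x) := by
  have h : exp ((a + b) • L) = exp (a • L) * exp (b • L) := by
    rw [add_smul]
    let +nondep : NormedAlgebra ℚ (E →L[ℂ] E) := .restrictScalars ℚ ℂ (E →L[ℂ] E)
    exact exp_add_of_commute (((Commute.refl L).smul_left a).smul_right b)
  rw [h]; rfl

lemma exp_smul_cancel_apply
    {E : Type*} [NormedAddCommGroup E] [NormedSpace ℂ E] [CompleteSpace E]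
    (L : E →L[ℂ] E) (a : ℂ) (x : E) :
    exp (a • L) (exp (-a • L) x) = x := by
  rw [← exp_smul_add_apply, add_neg_cancel, zero_smul, exp_zero,
    ContinuousLinearMap.one_apply]

/-- Equivalence of the first SSPRK stage in transformed variables `V̄` (eq. (18))
and in original variables `Ū` (eq. (20)). -/
theorem ssprk_stage1_equiv
    {E : Type*} [NormedAddCommGroup E] [NormedSpace ℂ E] [CompleteSpace E]
    (L : E →L[ℂ] E) (N : E → E)
    {I : Type*} [Fintype I] (w : I → ℝ) (s : I → ℝ)
    (tn Δt : ℝ) (tn1 : ℝ) (htn1 : tn1 = tn + Δt)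
    (Vn V1 : E)
    (hV1 : V1 = Vn + Δt • ∑ k : I, w k •
      exp ((-((tn : ℂ) + (s k : ℂ))) • L)
        (N (exp (((tn : ℂ) + (s k : ℂ)) • L) Vn)))
    (Un U1 : E)
    (hUn : Un = exp ((tn : ℂ) • L) Vn)
    (hU1 : U1 = exp ((tn1 : ℂ) • L) V1) :
    U1 = exp ((Δt : ℂ) • L) Un +
      Δt • exp ((Δt : ℂ) • L)
        (∑ k : I, w k • exp ((-(s k : ℂ)) • L)
          (N (exp ((s k : ℂ) • L) Un))) := by
  subst hV1 hUn hU1 htn1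
  rw [map_add, ContinuousLinearMap.map_smul_of_tower]
  congr 1
  · rw [show ((tn + Δt : ℝ) : ℂ) = (Δt : ℂ) + (tn : ℂ) by push_cast; ring,
      exp_smul_add_apply]
  · congr 1
    rw [map_sum, map_sum]
    refine Finset.sum_congr rfl fun k _ => ?_
    rw [ContinuousLinearMap.map_smul_of_tower, ContinuousLinearMap.map_smul_of_tower]
    congr 1
    rw [show ((tn + Δt : ℝ) : ℂ) = (Δt : ℂ) + ((-(s k : ℂ)) + ((tn : ℂ) + (s k : ℂ))) by
        push_cast; ring,
      exp_smul_add_apply, exp_smul_add_apply,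
      show (-((tn : ℂ) + (s k : ℂ))) • L = (-(((tn : ℂ) + (s k : ℂ)))) • L from rfl,
      exp_smul_cancel_apply,
      show ((tn : ℂ) + (s k : ℂ)) = (s k : ℂ) + (tn : ℂ) by ring,
      exp_smul_add_apply]
end

section
/- Let E be a complex Banach space, L : E →L[ℂ] E, N : E → E, and let a finite index set I with weights w : I → ℝ and phase shifts s : I → ℝ be given. Fix tⁿ ∈ ℝ and Δt ∈ ℝ, and set t^{n+1} = tⁿ + Δt and t^{n+1/2} = tⁿ + Δt/2. Suppose Vⁿ, V₁, V₂ ∈ E satisfy V₂ = (3/4) • Vⁿ + (1/4) • (V₁ + Δt • ∑_{k ∈ I} w k • exp(-(t^{n+1} + s k) • L)(N(exp((t^{n+1} + s k) • L)(V₁)))). Define Ūⁿ = exp(tⁿ • L)(Vⁿ), Ū₁ = exp(t^{n+1} • L)(V₁), and Ū₂ = exp(t^{n+1/2} • L)(V₂). Then Ū₂ = (3/4) • exp((Δt/2) • L)(Ūⁿ) + (1/4) • exp(-(Δt/2) • L)(Ū₁ + Δt • ∑_{k ∈ I} w k • exp(-(s k) • L)(N(exp((s k) • L)(Ū₁)))).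 -/
open NormedSpace

lemma exp_smul_apply_exp_smul
    {E : Type*} [NormedAddCommGroup E] [NormedSpace ℂ E] [CompleteSpace E]
    (L : E →L[ℂ] E) (a b : ℂ) (x : E) :
    exp (a • L) (exp (b • L) x) = exp ((a + b) • L) x := by
  rw [add_smul, exp_add_of_commute_of_mem_ball (𝕂 := ℂ) (((Commute.refl L).smul_left a).smul_right b)
      ((expSeries_radius_eq_top ℂ (E →L[ℂ] E)).symm ▸ edist_lt_top _ _)
      ((expSeries_radius_eq_top ℂ (E →L[ℂ] E)).symm ▸ edist_lt_top _ _),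
    ContinuousLinearMap.mul_apply]

/-- Equivalence of the second SSPRK stage in transformed variables `V̄` (eq. (22))
and in original variables `Ū` (eq. (23)). -/
theorem ssprk_stage2_equiv
    {E : Type*} [NormedAddCommGroup E] [NormedSpace ℂ E] [CompleteSpace E]
    (L : E →L[ℂ] E) (N : E → E)
    {I : Type*} [Fintype I] (w : I → ℝ) (s : I → ℝ)
    (tn Δt : ℝ) (tn1 tnhalf : ℝ)
    (htn1 : tn1 = tn + Δt) (htnhalf : tnhalf = tn + Δt / 2)
    (Vn V1 V2 : E)
    (hV2 : V2 = (3 / 4 : ℝ) • Vn + (1 / 4 : ℝ) •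
      (V1 + Δt • ∑ k : I, w k •
        exp ((-((tn1 : ℂ) + (s k : ℂ))) • L)
          (N (exp (((tn1 : ℂ) + (s k : ℂ)) • L) V1))))
    (Un U1 U2 : E)
    (hUn : Un = exp ((tn : ℂ) • L) Vn)
    (hU1 : U1 = exp ((tn1 : ℂ) • L) V1)
    (hU2 : U2 = exp ((tnhalf : ℂ) • L) V2) :
    U2 = (3 / 4 : ℝ) • exp (((Δt / 2 : ℝ) : ℂ) • L) Un +
      (1 / 4 : ℝ) • exp ((-((Δt / 2 : ℝ) : ℂ)) • L)
        (U1 + Δt • ∑ k : I, w k • exp ((-(s k : ℂ)) • L)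
          (N (exp ((s k : ℂ) • L) U1))) := by
  subst htn1 htnhalf hV2 hUn hU1 hU2
  simp only [map_add, ContinuousLinearMap.map_smul_of_tower, map_sum,
    exp_smul_apply_exp_smul]
  congr 2
  · push_cast; ring_nf
  · congr 1
    · push_cast; ring_nf
    · congr 1
      apply Finset.sum_congr rfl
      intro k _
      congr 2
      · push_cast; ring_nf
      · congr 2
        push_cast; ring_nf
end
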